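/- Two gauges γ₁ and γ₂ on a finite-dimensional vector space X are isometric (there is a map T : X → X with γ₂(Tz − Tx) = γ₁(z − x) for all x,z) if and only if their unit balls K₁ and K₂ are linearly equivalent, i.e., there exists a linear isomorphism T of X with T(K₁) = K₂. -/

import Mathlib

/-- A gauge: positive, nondegenerate, positively homogeneous, subadditive. -/
def IsGauge {X : Type*} [AddCommGroup X] [Module ℝ X] (γ : X → ℝ) : Prop :=
  (∀ x : X, 0 ≤ γ x ∧ (γ x = 0 ↔ x = 0)) ∧
  (∀ α : ℝ, 0 ≤ α → ∀ x : X, γ (α • x) = α * γ x) ∧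
  (∀ x y : X, γ (x + y) ≤ γ x + γ y)

section Aux

variable {X : Type*} [AddCommGroup X] [Module ℝ X]

lemma IsGauge.zero {γ : X → ℝ} (h : IsGauge γ) : γ 0 = 0 := (h.1 0).2.mpr rfl

lemma IsGauge.nonneg {γ : X → ℝ} (h : IsGauge γ) (x : X) : 0 ≤ γ x := (h.1 x).1

lemma IsGauge.sum_le {γ : X → ℝ} (h : IsGauge γ) {ι : Type*} (s : Finset ι) (f : ι → X) :
    γ (∑ i ∈ s, f i) ≤ ∑ i ∈ s, γ (f i) := by
  induction s using Finset.cons_induction with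
  | empty => simp [h.zero]
  | cons a s ha ih =>
      rw [Finset.sum_cons, Finset.sum_cons]
      exact le_trans (h.2.2 _ _) (by linarith)

lemma IsGauge.smul_le {γ : X → ℝ} (h : IsGauge γ) (c : ℝ) (x : X) :
    γ (c • x) ≤ |c| * (γ x + γ (-x)) := by
  rcases le_or_gt 0 c with hc | hc
  · rw [h.2.1 c hc x, abs_of_nonneg hc]
    have := h.nonneg (-x)
    have := h.nonneg x
    nlinarith
  · have : c • x = (-c) • (-x) := by simp
    rw [this, h.2.1 (-c) (by linarith) (-x), abs_of_neg hc]
    have := h.nonneg x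
    nlinarith

/-- Transport of a gauge through a linear equivalence. -/
lemma IsGauge.comp {Y : Type*} [AddCommGroup Y] [Module ℝ Y] {γ : X → ℝ}
    (h : IsGauge γ) (e : Y ≃ₗ[ℝ] X) : IsGauge (γ ∘ e) := by
  refine ⟨fun x => ⟨h.nonneg _, ?_⟩, fun α hα x => ?_, fun x y => ?_⟩
  · simp only [Function.comp_apply]
    rw [(h.1 (e x)).2]
    constructor
    · intro hx; simpa using congrArg e.symm hx
    · intro hx; simp [hx]
  · simp only [Function.comp_apply, map_smul]
    exact h.2.1 α hα _
  · simp only [Function.comp_apply, map_add]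
    exact h.2.2 _ _

variable {d : ℕ}

/-- A gauge on `Fin d → ℝ` is bounded above by a multiple of the sup norm. -/
lemma IsGauge.exists_upper {γ : (Fin d → ℝ) → ℝ} (h : IsGauge γ) :
    ∃ C : ℝ, 0 ≤ C ∧ ∀ x, γ x ≤ C * ‖x‖ := by
  set b := Pi.basisFun ℝ (Fin d) with hb
  refine ⟨∑ i, (γ (b i) + γ (-(b i))), ?_, fun x => ?_⟩
  · exact Finset.sum_nonneg fun i _ => by
      have := h.nonneg (b i); have := h.nonneg (-(b i)); linarith
  · have hx : x = ∑ i, x i • b i := by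
      conv_lhs => rw [← b.sum_repr x]
      simp [hb]
    calc γ x = γ (∑ i, x i • b i) := by rw [← hx]
    _ ≤ ∑ i, γ (x i • b i) := h.sum_le _ _
    _ ≤ ∑ i, ‖x‖ * (γ (b i) + γ (-(b i))) := by
        refine Finset.sum_le_sum fun i _ => le_trans (h.smul_le _ _) ?_
        refine mul_le_mul_of_nonneg_right ?_ (by
          have := h.nonneg (b i); have := h.nonneg (-(b i)); linarith)
        rw [← Real.norm_eq_abs]
        exact norm_le_pi_norm x i
    _ = (∑ i, (γ (b i) + γ (-(b i)))) * ‖x‖ := by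
        rw [Finset.sum_mul]
        exact Finset.sum_congr rfl fun i _ => mul_comm _ _

lemma IsGauge.lipschitz_bound {γ : (Fin d → ℝ) → ℝ} (h : IsGauge γ) {C : ℝ}
    (hC : ∀ x, γ x ≤ C * ‖x‖) (x y : (Fin d → ℝ)) : |γ x - γ y| ≤ C * ‖x - y‖ := by
  rw [abs_sub_le_iff]
  constructor
  · have h1 : γ x ≤ γ y + γ (x - y) := by
      have := h.2.2 y (x - y); simpa using this
    have := hC (x - y); linarith
  · have h1 : γ y ≤ γ x + γ (y - x) := by
      have := h.2.2 x (y - x); simpa using this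
    have h2 := hC (y - x)
    rw [norm_sub_rev] at h2
    linarith

lemma IsGauge.continuous' {γ : (Fin d → ℝ) → ℝ} (h : IsGauge γ) : Continuous γ := by
  obtain ⟨C, hC0, hC⟩ := h.exists_upper
  have : LipschitzWith C.toNNReal γ := by
    refine LipschitzWith.of_dist_le_mul fun x y => ?_
    rw [Real.dist_eq, Real.coe_toNNReal C hC0, dist_eq_norm]
    exact h.lipschitz_bound hC x y
  exact this.continuous

/-- A gauge on `Fin d → ℝ` is bounded below by a positive multiple of the sup norm. -/
lemma IsGauge.exists_lower {γ : (Fin d → ℝ) → ℝ} (h : IsGauge γ) :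
    ∃ c : ℝ, 0 < c ∧ ∀ x, c * ‖x‖ ≤ γ x := by
  by_cases H : ∃ x : Fin d → ℝ, x ≠ 0
  · obtain ⟨x₀, hx₀⟩ := H
    have hsne : (Metric.sphere (0 : Fin d → ℝ) 1).Nonempty := by
      refine ⟨‖x₀‖⁻¹ • x₀, ?_⟩
      simp [norm_smul, abs_of_nonneg (inv_nonneg.mpr (norm_nonneg x₀)),
        inv_mul_cancel₀ (norm_ne_zero_iff.mpr hx₀)]
    obtain ⟨z, hz, hzmin⟩ := (isCompact_sphere (0 : Fin d → ℝ) 1).exists_isMinOn hsne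
      h.continuous'.continuousOn
    have hz1 : ‖z‖ = 1 := by simpa using hz
    have hzne : z ≠ 0 := by intro hzz; rw [hzz] at hz1; simp at hz1
    have hc : 0 < γ z := lt_of_le_of_ne (h.nonneg z) (fun hh => hzne ((h.1 z).2.mp hh.symm))
    refine ⟨γ z, hc, fun x => ?_⟩
    by_cases hx : x = 0
    · simp [hx, h.zero]
    · have hnx : (0:ℝ) < ‖x‖ := norm_pos_iff.mpr hx
      have hu : ‖x‖⁻¹ • x ∈ Metric.sphere (0 : Fin d → ℝ) 1 := by
        simp [norm_smul, abs_of_nonneg (inv_nonneg.mpr (norm_nonneg x)),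
          inv_mul_cancel₀ (ne_of_gt hnx)]
      have hmin := hzmin hu
      have hxu : x = ‖x‖ • (‖x‖⁻¹ • x) := by
        rw [smul_smul, mul_inv_cancel₀ (ne_of_gt hnx), one_smul]
      calc γ z * ‖x‖ ≤ γ (‖x‖⁻¹ • x) * ‖x‖ :=
            mul_le_mul_of_nonneg_right hmin (norm_nonneg x)
      _ = ‖x‖ * γ (‖x‖⁻¹ • x) := mul_comm _ _
      _ = γ (‖x‖ • (‖x‖⁻¹ • x)) := (h.2.1 ‖x‖ (norm_nonneg x) _).symm
      _ = γ x := by rw [← hxu]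
  · push_neg at H
    exact ⟨1, one_pos, fun x => by simp [H x, h.zero]⟩

open MeasureTheory Filter Topology in
/-- The key step: an isometry of gauges on `Fin d → ℝ` yields a linear gauge-isometry. -/
lemma key {d : ℕ} {δ₁ δ₂ : (Fin d → ℝ) → ℝ} (h₁ : IsGauge δ₁) (h₂ : IsGauge δ₂)
    (T : (Fin d → ℝ) → (Fin d → ℝ)) (hT : ∀ x z, δ₂ (T z - T x) = δ₁ (z - x)) :
    ∃ S : (Fin d → ℝ) ≃ₗ[ℝ] (Fin d → ℝ), ∀ x, δ₂ (S x) = δ₁ x := by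
  obtain ⟨C₁, hC₁0, hC₁⟩ := h₁.exists_upper
  obtain ⟨c₂, hc₂0, hc₂⟩ := h₂.exists_lower
  -- T is Lipschitz
  have hLip : LipschitzWith (C₁ / c₂).toNNReal T := by
    refine LipschitzWith.of_dist_le_mul fun x y => ?_
    rw [dist_eq_norm, dist_eq_norm, Real.coe_toNNReal _ (div_nonneg hC₁0 hc₂0.le)]
    have h1 : c₂ * ‖T x - T y‖ ≤ δ₂ (T x - T y) := hc₂ _
    have h2 : δ₂ (T x - T y) = δ₁ (x - y) := hT y x
    have h3 : δ₁ (x - y) ≤ C₁ * ‖x - y‖ := hC₁ _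
    rw [div_mul_eq_mul_div, le_div_iff₀ hc₂0]
    nlinarith [norm_nonneg (x - y), norm_nonneg (T x - T y)]
  -- Rademacher: T is differentiable somewhere
  have hvol : (volume : Measure (Fin d → ℝ)) ≠ 0 := by
    intro hv
    have := isOpen_univ.measure_pos (volume : Measure (Fin d → ℝ)) ⟨0, trivial⟩
    rw [hv] at this; simp at this
  haveI : (ae (volume : Measure (Fin d → ℝ))).NeBot := ae_neBot.mpr hvol
  obtain ⟨x₀, hx₀⟩ := (hLip.ae_differentiableAt (μ := volume)).exists
  set D := fderiv ℝ T x₀ with hD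
  have hDf : HasFDerivAt T D x₀ := hx₀.hasFDerivAt
  -- the derivative is a gauge isometry
  have hkey : ∀ v, δ₂ (D v) = δ₁ v := by
    intro v
    have hg : HasDerivAt (fun t : ℝ => x₀ + t • v) v 0 := by
      simpa using ((hasDerivAt_id (0:ℝ)).smul_const v).const_add x₀
    have hline : HasDerivAt (fun t : ℝ => T (x₀ + t • v)) (D v) 0 := by
      have hDf' : HasFDerivAt T D (x₀ + (0:ℝ) • v) := by simpa using hDf
      have := hDf'.comp_hasDerivAt 0 hg
      exact this
    have hslope := hasDerivAt_iff_tendsto_slope.mp hline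
    have hcont : Tendsto (fun t : ℝ => δ₂ (slope (fun t : ℝ => T (x₀ + t • v)) 0 t))
        (𝓝[>] (0:ℝ)) (𝓝 (δ₂ (D v))) := by
      refine (h₂.continuous'.continuousAt.tendsto.comp ?_)
      exact hslope.mono_left (nhdsWithin_mono 0 (fun t ht => ne_of_gt ht))
    have heq : ∀ t ∈ Set.Ioi (0:ℝ),
        δ₂ (slope (fun t : ℝ => T (x₀ + t • v)) 0 t) = δ₁ v := by
      intro t ht
      have ht0 : (0:ℝ) < t := ht
      have hslope_eq : slope (fun t : ℝ => T (x₀ + t • v)) 0 t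
          = t⁻¹ • (T (x₀ + t • v) - T x₀) := by
        simp [slope_def_module]
      rw [hslope_eq, h₂.2.1 t⁻¹ (inv_nonneg.mpr ht0.le) _,
        hT x₀ (x₀ + t • v)]
      have : x₀ + t • v - x₀ = t • v := by abel
      rw [this, h₁.2.1 t ht0.le v]
      field_simp
    have : Tendsto (fun _ : ℝ => δ₁ v) (𝓝[>] (0:ℝ)) (𝓝 (δ₂ (D v))) := by
      refine hcont.congr' ?_
      filter_upwards [self_mem_nhdsWithin] with t ht
      exact (heq t ht)
    exact tendsto_nhds_unique this tendsto_const_nhds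
  -- D is bijective
  have hinj : Function.Injective (D : (Fin d → ℝ) →ₗ[ℝ] (Fin d → ℝ)) := by
    rw [injective_iff_map_eq_zero]
    intro v hv
    have : δ₂ (D v) = 0 := by rw [show D v = 0 from hv, h₂.zero]
    rw [hkey v] at this
    exact (h₁.1 v).2.mp this
  have hsurj : Function.Surjective (D : (Fin d → ℝ) →ₗ[ℝ] (Fin d → ℝ)) :=
    LinearMap.injective_iff_surjective.mp hinj
  exact ⟨LinearEquiv.ofBijective (D : (Fin d → ℝ) →ₗ[ℝ] (Fin d → ℝ)) ⟨hinj, hsurj⟩, hkey⟩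

lemma gauge_le_of_image_subset {γ₁ γ₂ : X → ℝ} (h₁ : IsGauge γ₁) (h₂ : IsGauge γ₂)
    (T : X ≃ₗ[ℝ] X) (h : T '' {x : X | γ₁ x ≤ 1} ⊆ {x : X | γ₂ x ≤ 1}) (x : X) :
    γ₂ (T x) ≤ γ₁ x := by
  by_cases hx : x = 0
  · simp [hx, h₂.zero, (h₁.zero).ge, h₁.zero]
  · set t := γ₁ x with ht
    have ht0 : 0 < t := lt_of_le_of_ne (h₁.nonneg x) (fun hh => hx ((h₁.1 x).2.mp hh.symm))
    have hmem : t⁻¹ • x ∈ {x : X | γ₁ x ≤ 1} := by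
      simp only [Set.mem_setOf_eq]
      rw [h₁.2.1 t⁻¹ (inv_nonneg.mpr ht0.le) x, ← ht, inv_mul_cancel₀ (ne_of_gt ht0)]
    have := h ⟨t⁻¹ • x, hmem, rfl⟩
    simp only [Set.mem_setOf_eq, map_smul] at this
    rw [h₂.2.1 t⁻¹ (inv_nonneg.mpr ht0.le) (T x)] at this
    calc γ₂ (T x) = t * (t⁻¹ * γ₂ (T x)) := by field_simp
    _ ≤ t * 1 := mul_le_mul_of_nonneg_left this ht0.le
    _ = t := mul_one t

end Aux

/-- Two gauges are isometric iff their unit balls are linearly equivalent. -/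
theorem stmt_4 {X : Type*} [AddCommGroup X] [Module ℝ X] [FiniteDimensional ℝ X]
    (γ₁ γ₂ : X → ℝ) (hγ₁ : IsGauge γ₁) (hγ₂ : IsGauge γ₂) :
    (∃ T : X → X, ∀ x z : X, γ₂ (T z - T x) = γ₁ (z - x)) ↔
    (∃ T : X ≃ₗ[ℝ] X, T '' {x : X | γ₁ x ≤ 1} = {x : X | γ₂ x ≤ 1}) := by
  constructor
  · rintro ⟨T, hT⟩
    set d := Module.finrank ℝ X with hd
    let e : X ≃ₗ[ℝ] (Fin d → ℝ) := (Module.finBasis ℝ X).equivFun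
    have h₁ : IsGauge (γ₁ ∘ e.symm) := hγ₁.comp e.symm
    have h₂ : IsGauge (γ₂ ∘ e.symm) := hγ₂.comp e.symm
    have hT' : ∀ x z : Fin d → ℝ,
        (γ₂ ∘ e.symm) ((e ∘ T ∘ e.symm) z - (e ∘ T ∘ e.symm) x) = (γ₁ ∘ e.symm) (z - x) := by
      intro x z
      simp only [Function.comp_apply, map_sub, LinearEquiv.symm_apply_apply]
      exact hT (e.symm x) (e.symm z)
    obtain ⟨S', hS'⟩ := key h₁ h₂ (e ∘ T ∘ e.symm) hT'
    set F : X ≃ₗ[ℝ] X := e.trans (S'.trans e.symm) with hF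
    refine ⟨F, ?_⟩
    have hiso : ∀ x : X, γ₂ (F x) = γ₁ x := by
      intro x
      have := hS' (e x)
      simpa [hF] using this
    ext y
    constructor
    · rintro ⟨x, hx, rfl⟩
      show γ₂ (F x) ≤ 1
      rw [hiso x]; exact hx
    · intro hy
      refine ⟨F.symm y, ?_, F.apply_symm_apply y⟩
      show γ₁ (F.symm y) ≤ 1
      rw [← hiso (F.symm y), F.apply_symm_apply]
      exact hy
  · rintro ⟨T, hT⟩
    refine ⟨fun x => T x, fun x z => ?_⟩
    have hle : ∀ x, γ₂ (T x) ≤ γ₁ x :=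
      gauge_le_of_image_subset hγ₁ hγ₂ T (hT ▸ Set.Subset.refl _)
    have hge : ∀ x, γ₁ x ≤ γ₂ (T x) := by
      intro x
      have hsub : T.symm '' {x : X | γ₂ x ≤ 1} ⊆ {x : X | γ₁ x ≤ 1} := by
        rw [← hT, Set.image_image]
        intro y hy
        obtain ⟨z, hz, rfl⟩ := hy
        simpa using hz
      have := gauge_le_of_image_subset hγ₂ hγ₁ T.symm hsub (T x)
      rwa [LinearEquiv.symm_apply_apply] at this
    have : γ₂ (T z - T x) = γ₂ (T (z - x)) := by rw [map_sub]
    rw [this]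
    exact le_antisymm (hle _) (hge _)
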